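/- Divergence form of the Monge–Ampère operator: let u : ℝⁿ → ℝ be three times continuously differentiable (ContDiff ℝ 3). Then for every x, n · det(D²u(x)) = ∑_i ∂_i ( y ↦ ∑_j cof(D²u(y))_{ij} ∂_j u(y) )(x); that is, det D²u = (1/n) div( (cof D²u) Du ). -/

import Mathlib

open Matrix

/-- The determinant as a continuous multilinear map in the rows. -/
noncomputable def detCM (n : ℕ) : ContinuousMultilinearMap ℝ (fun _ : Fin n => (Fin n → ℝ)) ℝ :=
  { (Matrix.detRowAlternating : (Fin n → ℝ) [⋀^Fin n]→ₗ[ℝ] ℝ).toMultilinearMap with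
    cont := by
      have : Continuous fun m : Fin n → Fin n → ℝ => Matrix.det (Matrix.of m) :=
        Continuous.matrix_det continuous_id
      exact this }

/-- The Hessian matrix of `u : ℝⁿ → ℝ`: `(hessian u x)_{ij} = ∂_i ∂_j u (x)`. -/
noncomputable def hessian {n : ℕ} (u : (Fin n → ℝ) → ℝ) (x : Fin n → ℝ) :
    Matrix (Fin n) (Fin n) ℝ :=
  Matrix.of fun i j =>
    fderiv ℝ (fun y => fderiv ℝ u y (Pi.single j 1)) x (Pi.single i 1)

/-- Divergence form of the Monge–Ampère operator: for `u : ℝⁿ → ℝ` of class `C³`,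
`n · det D²u = div((cof D²u) Du)`, where `cof M = (adjugate M)ᵀ` is the cofactor matrix. -/
theorem det_hessian_eq_div_cof_grad {n : ℕ} (u : (Fin n → ℝ) → ℝ)
    (hu : ContDiff ℝ 3 u) (x : Fin n → ℝ) :
    (n : ℝ) * (hessian u x).det
      = ∑ i, fderiv ℝ
          (fun y => ∑ j, ((hessian u y).adjugate)ᵀ i j * fderiv ℝ u y (Pi.single j 1))
          x (Pi.single i 1) := by
  classical
  set A : (Fin n → ℝ) → Fin n → Fin n → ℝ := fun y k l => hessian u y k l with hAdef
  -- first derivatives are C²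
  have hG : ∀ l : Fin n, ContDiff ℝ 2 (fun y => fderiv ℝ u y (Pi.single l 1)) := fun l =>
    (hu.fderiv_right (by norm_num)).clm_apply contDiff_const
  -- hessian entries are C¹
  have hM : ∀ r l : Fin n, ContDiff ℝ 1 (fun y => A y r l) := fun r l =>
    ((hG l).fderiv_right (by norm_num)).clm_apply contDiff_const
  have hMd : ∀ r l, DifferentiableAt ℝ (fun y => A y r l) x := fun r l =>
    ((hM r l).differentiable one_ne_zero) x
  have hrow : ∀ r, DifferentiableAt ℝ (fun y => A y r) x := fun r =>
    differentiableAt_pi.2 fun l => hMd r l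
  have hrowcomp : ∀ (r l : Fin n) (v : Fin n → ℝ),
      fderiv ℝ (fun y => A y r) x v l = fderiv ℝ (fun y => A y r l) x v := by
    intro r l v
    have h1 : fderiv ℝ (fun y (l : Fin n) => A y r l) x = ContinuousLinearMap.pi fun l =>
        fderiv ℝ (fun y => A y r l) x := fderiv_pi fun l => hMd r l
    have h2 : (fun y => A y r) = fun y (l : Fin n) => A y r l := rfl
    rw [h2, h1]; rfl
  -- symmetry of third derivatives
  have hsym2 : ∀ (g : (Fin n → ℝ) → ℝ), ContDiff ℝ 2 g → ∀ v w,
      fderiv ℝ (fun y => fderiv ℝ g y w) x v = fderiv ℝ (fun y => fderiv ℝ g y v) x w := by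
    intro g hg v w
    have hd : DifferentiableAt ℝ (fderiv ℝ g) x :=
      ((hg.fderiv_right (le_refl 2)).differentiable one_ne_zero) x
    have key : ∀ a b : Fin n → ℝ, fderiv ℝ (fun y => fderiv ℝ g y b) x a
        = fderiv ℝ (fderiv ℝ g) x a b := by
      intro a b
      rw [fderiv_clm_apply hd (differentiableAt_const b)]
      simp
    rw [key, key]
    exact (hg.contDiffAt.isSymmSndFDerivAt (by simp)) v w
  have hsym : ∀ i r l : Fin n, fderiv ℝ (fun y => A y r l) x (Pi.single i 1)
      = fderiv ℝ (fun y => A y i l) x (Pi.single r 1) := fun i r l =>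
    hsym2 (fun y => fderiv ℝ u y (Pi.single l 1)) (hG l) (Pi.single i 1) (Pi.single r 1)
  -- adjugate transpose as determinant of row-updated matrix
  have hadj : ∀ (y : Fin n → ℝ) (i j : Fin n),
      ((hessian u y).adjugate)ᵀ i j = (detCM n) (Function.update (A y) i (Pi.single j 1)) := by
    intro y i j
    rw [Matrix.transpose_apply, Matrix.adjugate_apply]
    rfl
  -- the derivative CLM of each row
  have hRd : ∀ (i j r : Fin n), HasFDerivAt (fun y => Function.update (A y) i (Pi.single j 1) r)
      (if r = i then 0 else fderiv ℝ (fun y => A y r) x) x := by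
    intro i j r
    rcases eq_or_ne r i with rfl | hri
    · simp only [Function.update_self, if_pos rfl]
      exact hasFDerivAt_const _ _
    · simp only [Function.update_of_ne hri, if_neg hri]
      exact (hrow r).hasFDerivAt
  -- derivative of y ↦ (detCM n) (update (A y) i (e j))
  have hdet : ∀ i j : Fin n, HasFDerivAt (fun y => (detCM n) (fun r => Function.update (A y) i (Pi.single j 1) r))
      (∑ r, ((detCM n).toContinuousLinearMap (fun r => Function.update (A x) i (Pi.single j 1) r) r) ∘L
        (if r = i then 0 else fderiv ℝ (fun y => A y r) x)) x := by
    intro i j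
    exact HasFDerivAt.multilinear_comp (detCM n) (hRd i j)
  have hgj : ∀ j : Fin n, HasFDerivAt (fun y => fderiv ℝ u y (Pi.single j 1))
      (fderiv ℝ (fun y => fderiv ℝ u y (Pi.single j 1)) x) x := fun j =>
    (((hG j).differentiable (by norm_num)) x).hasFDerivAt
  -- value of the derivative CLM at a basis vector
  have hDval : ∀ i j i' : Fin n,
      (∑ r, ((detCM n).toContinuousLinearMap (fun r => Function.update (A x) i (Pi.single j 1) r) r) ∘L
        (if r = i then 0 else fderiv ℝ (fun y => A y r) x)) (Pi.single i' 1)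
      = ∑ r, (detCM n) (Function.update (Function.update (A x) i (Pi.single j 1)) r
          ((if r = i then (0 : (Fin n → ℝ) →L[ℝ] (Fin n → ℝ)) else
            fderiv ℝ (fun y => A y r) x) (Pi.single i' 1))) := by
    intro i j i'
    rw [ContinuousLinearMap.sum_apply]
    refine Finset.sum_congr rfl fun r _ => ?_
    rw [ContinuousLinearMap.comp_apply]
    rfl
  -- the inner fderiv of the statement, computed
  have hFi : ∀ i : Fin n, fderiv ℝ
      (fun y => ∑ j, ((hessian u y).adjugate)ᵀ i j * fderiv ℝ u y (Pi.single j 1))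
      x (Pi.single i 1)
      = ∑ j, ((detCM n) (Function.update (A x) i (Pi.single j 1)) * A x i j
          + fderiv ℝ u x (Pi.single j 1) *
            ∑ r, (detCM n) (Function.update (Function.update (A x) i (Pi.single j 1)) r
              ((if r = i then (0 : (Fin n → ℝ) →L[ℝ] (Fin n → ℝ)) else
                fderiv ℝ (fun y => A y r) x) (Pi.single i 1)))) := by
    intro i
    have hfun : (fun y => ∑ j, ((hessian u y).adjugate)ᵀ i j * fderiv ℝ u y (Pi.single j 1))
        = fun y => ∑ j, (detCM n) (fun r => Function.update (A y) i (Pi.single j 1) r)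
            * fderiv ℝ u y (Pi.single j 1) := by
      funext y
      exact Finset.sum_congr rfl fun j _ => by rw [hadj y i j]
    rw [hfun]
    have hsum : HasFDerivAt (fun y => ∑ j, (detCM n) (fun r => Function.update (A y) i (Pi.single j 1) r)
        * fderiv ℝ u y (Pi.single j 1))
        (∑ j, ((detCM n) (fun r => Function.update (A x) i (Pi.single j 1) r) •
            fderiv ℝ (fun y => fderiv ℝ u y (Pi.single j 1)) x
          + fderiv ℝ u x (Pi.single j 1) •
            (∑ r, ((detCM n).toContinuousLinearMap (fun r => Function.update (A x) i (Pi.single j 1) r) r) ∘L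
              (if r = i then 0 else fderiv ℝ (fun y => A y r) x)))) x :=
      HasFDerivAt.fun_sum fun j _ => (hdet i j).mul (hgj j)
    rw [hsum.fderiv]
    rw [ContinuousLinearMap.sum_apply]
    refine Finset.sum_congr rfl fun j _ => ?_
    rw [ContinuousLinearMap.add_apply, ContinuousLinearMap.smul_apply,
      ContinuousLinearMap.smul_apply, hDval i j i]
    have : fderiv ℝ (fun y => fderiv ℝ u y (Pi.single j 1)) x (Pi.single i 1) = A x i j := rfl
    rw [this]
    simp only [smul_eq_mul]
  rw [Finset.sum_congr rfl fun i _ => hFi i]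
  rw [Finset.sum_congr rfl fun i (_ : i ∈ Finset.univ) => Finset.sum_add_distrib (s := Finset.univ)]
  rw [Finset.sum_add_distrib]
  -- Part 1 : the trace term equals n * det
  have hpart1 : ∑ i, ∑ j, (detCM n) (Function.update (A x) i (Pi.single j 1)) * A x i j
      = (n : ℝ) * (hessian u x).det := by
    have h1 : ∀ i j : Fin n, (detCM n) (Function.update (A x) i (Pi.single j 1))
        = (hessian u x).adjugate j i := by
      intro i j
      rw [← hadj x i j, Matrix.transpose_apply]
    calc ∑ i, ∑ j, (detCM n) (Function.update (A x) i (Pi.single j 1)) * A x i j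
        = ∑ j, ∑ i, (hessian u x).adjugate j i * hessian u x i j := by
          rw [Finset.sum_comm]
          exact Finset.sum_congr rfl fun j _ => Finset.sum_congr rfl fun i _ => by rw [h1]

      _ = ∑ j, ((hessian u x).adjugate * hessian u x) j j := by
          exact Finset.sum_congr rfl fun j _ => (Matrix.mul_apply).symm
      _ = Matrix.trace ((hessian u x).adjugate * hessian u x) := rfl
      _ = (n : ℝ) * (hessian u x).det := by
          rw [Matrix.adjugate_mul, Matrix.trace_smul, Matrix.trace_one]
          simp [mul_comm]
  -- Part 2 : the Piola term vanishes
  have hpart2 : ∑ i, ∑ j, fderiv ℝ u x (Pi.single j 1) *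
      ∑ r, (detCM n) (Function.update (Function.update (A x) i (Pi.single j 1)) r
        ((if r = i then (0 : (Fin n → ℝ) →L[ℝ] (Fin n → ℝ)) else
          fderiv ℝ (fun y => A y r) x) (Pi.single i 1))) = 0 := by
    rw [Finset.sum_comm]
    refine Finset.sum_eq_zero fun j _ => ?_
    rw [← Finset.mul_sum]
    rw [show ∑ i, ∑ r, (detCM n) (Function.update (Function.update (A x) i (Pi.single j 1)) r
        ((if r = i then (0 : (Fin n → ℝ) →L[ℝ] (Fin n → ℝ)) else
          fderiv ℝ (fun y => A y r) x) (Pi.single i 1))) = 0 from ?_, mul_zero]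
    set t : Fin n → Fin n → ℝ := fun i r =>
      (detCM n) (Function.update (Function.update (A x) i (Pi.single j 1)) r
        ((if r = i then (0 : (Fin n → ℝ) →L[ℝ] (Fin n → ℝ)) else
          fderiv ℝ (fun y => A y r) x) (Pi.single i 1))) with htdef
    have hanti : ∀ i r, t i r = - t r i := by
      intro i r
      rcases eq_or_ne i r with rfl | hir
      · have : t i i = 0 := by
          rw [htdef]
          simp only [if_pos rfl, ContinuousLinearMap.zero_apply]
          exact (detCM n).map_update_zero _ _
        rw [this, neg_zero]
      · have hw : fderiv ℝ (fun y => A y r) x (Pi.single i 1)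
            = fderiv ℝ (fun y => A y i) x (Pi.single r 1) := by
          funext l
          rw [hrowcomp, hrowcomp]
          exact hsym i r l
        have hswap : Function.update (Function.update (A x) i (Pi.single j 1)) r
              (fderiv ℝ (fun y => A y r) x (Pi.single i 1)) ∘ Equiv.swap i r
            = Function.update (Function.update (A x) r (Pi.single j 1)) i
              (fderiv ℝ (fun y => A y i) x (Pi.single r 1)) := by
          funext k
          simp only [Function.comp_apply]
          rcases eq_or_ne k i with rfl | hki
          · rw [Equiv.swap_apply_left, Function.update_self, Function.update_self, hw]
          · rcases eq_or_ne k r with rfl | hkr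
            · rw [Equiv.swap_apply_right, Function.update_of_ne hir, Function.update_self,
                Function.update_of_ne (Ne.symm hir), Function.update_self]
            · rw [Equiv.swap_apply_of_ne_of_ne hki hkr, Function.update_of_ne hkr,
                Function.update_of_ne hki, Function.update_of_ne hki, Function.update_of_ne hkr]
        have hmswap : (detCM n) ((Function.update (Function.update (A x) i (Pi.single j 1)) r
              (fderiv ℝ (fun y => A y r) x (Pi.single i 1))) ∘ Equiv.swap i r)
            = - (detCM n) (Function.update (Function.update (A x) i (Pi.single j 1)) r
              (fderiv ℝ (fun y => A y r) x (Pi.single i 1))) :=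
          Matrix.detRowAlternating.map_swap (Function.update (Function.update (A x) i
            (Pi.single j 1)) r (fderiv ℝ (fun y => A y r) x (Pi.single i 1))) hir
        rw [htdef]
        simp only [if_neg hir, if_neg (Ne.symm hir)]
        rw [← hswap, hmswap]
        ring_nf
    have hS : ∑ i, ∑ r, t i r = - ∑ i, ∑ r, t i r := by
      calc ∑ i, ∑ r, t i r = ∑ i, ∑ r, - t r i :=
            Finset.sum_congr rfl fun i _ => Finset.sum_congr rfl fun r _ => hanti i r
        _ = - ∑ i, ∑ r, t r i := by rw [← Finset.sum_neg_distrib]; simp [Finset.sum_neg_distrib]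
        _ = - ∑ i, ∑ r, t i r := by rw [Finset.sum_comm]
    linarith [hS]
  rw [hpart1, hpart2, add_zero]
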